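/- Let X be a metric space, x ∈ X, r > 0, and let h be an injective partial function whose domain and range are contained in the open ball B(x,r). Let K, N > 0 with 1 + 1/N ≤ K. If h is K-bilipschitz and N-bigood (with respect to the center x and radius r), then the map h ∪ id_{X∖B(x,r)} (equal to h on the domain of h and to the identity on X ∖ B(x,r)) is K-bilipschitz. -/
import Mathlib


open Metric Set
open scoped Classical

/-- `f` is `K`-bilipschitz on the set `A`. -/
def BilipschitzOn {X : Type} [MetricSpace X] (K : ℝ) (f : X → X) (A : Set X) : Prop :=
  ∀ u ∈ A, ∀ v ∈ A,
    (1 / K) * dist u v ≤ dist (f u) (f v) ∧ dist (f u) (f v) ≤ K * dist u v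

/-- `f` is `N`-good on `A` with respect to the ball `B(x,r)`. -/
def NGoodOn {X : Type} [MetricSpace X] (N : ℝ) (x : X) (r : ℝ) (f : X → X) (A : Set X) : Prop :=
  ∀ y ∈ A, dist y (f y) ≤ (1 / N) * (r - dist y x)

/-- `f` is `N`-bigood on `A` with respect to the ball `B(x,r)`:
both `f` and its inverse are `N`-good. -/
def NBigoodOn {X : Type} [MetricSpace X] (N : ℝ) (x : X) (r : ℝ) (f : X → X) (A : Set X) : Prop :=
  NGoodOn N x r f A ∧ ∀ y ∈ A, dist (f y) y ≤ (1 / N) * (r - dist (f y) x)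

/-- If `h` is `K`-bilipschitz and `N`-bigood on a subset of `B(x,r)`
(with `1 + 1/N ≤ K`), then `h ∪ id_{X ∖ B(x,r)}` is `K`-bilipschitz. -/
theorem bilipschitz_union_id (X : Type) [MetricSpace X] (x : X) (r : ℝ) (hr : 0 < r)
    (K N : ℝ) (hK : 0 < K) (hN : 0 < N) (hKN : 1 + 1 / N ≤ K)
    (A : Set X) (h : X → X) (hinj : InjOn h A)
    (hdom : A ⊆ ball x r) (hrng : MapsTo h A (ball x r))
    (hbil : BilipschitzOn K h A) (hgood : NBigoodOn N x r h A) :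
    BilipschitzOn K (fun z => if z ∈ A then h z else z) (A ∪ (ball x r)ᶜ) := by
  have hNinv : (0:ℝ) < 1 / N := by positivity
  have hK1 : (1:ℝ) ≤ K := by linarith
  -- mixed case lemma
  have mixed : ∀ u ∈ A, ∀ v ∈ (ball x r)ᶜ,
      (1 / K) * dist u v ≤ dist (h u) v ∧ dist (h u) v ≤ K * dist u v := by
    intro u hu v hv
    have hvx : r ≤ dist v x := by
      simpa [Metric.mem_ball, not_lt, dist_comm] using hv
    constructor
    · -- lower bound
      have h1 : r - dist (h u) x ≤ dist (h u) v := by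
        have := dist_triangle v (h u) x
        rw [dist_comm v (h u)] at this
        linarith
      have h2 : dist (h u) u ≤ (1 / N) * dist (h u) v := by
        calc dist (h u) u ≤ (1 / N) * (r - dist (h u) x) := hgood.2 u hu
          _ ≤ (1 / N) * dist (h u) v := by
              apply mul_le_mul_of_nonneg_left h1 (le_of_lt hNinv)
      have h3 : dist u v ≤ K * dist (h u) v := by
        have t := dist_triangle u (h u) v
        rw [dist_comm u (h u)] at t
        have := dist_nonneg (x := h u) (y := v)
        nlinarith
      rw [div_mul_eq_mul_div, one_mul, div_le_iff₀ hK]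
      linarith [h3, mul_comm K (dist (h u) v)]
    · -- upper bound
      have h1 : r - dist u x ≤ dist u v := by
        have := dist_triangle v u x
        rw [dist_comm v u] at this
        linarith
      have h2 : dist u (h u) ≤ (1 / N) * dist u v := by
        calc dist u (h u) ≤ (1 / N) * (r - dist u x) := hgood.1 u hu
          _ ≤ (1 / N) * dist u v := mul_le_mul_of_nonneg_left h1 (le_of_lt hNinv)
      have t := dist_triangle (h u) u v
      rw [dist_comm (h u) u] at t
      nlinarith [dist_nonneg (x := u) (y := v)]
  intro u hu v hv
  simp only []
  by_cases huA : u ∈ A <;> by_cases hvA : v ∈ A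
  · simpa [huA, hvA] using hbil u huA v hvA
  · have hvB : v ∈ (ball x r)ᶜ := hv.resolve_left hvA
    simpa [huA, hvA] using mixed u huA v hvB
  · have huB : u ∈ (ball x r)ᶜ := hu.resolve_left huA
    have := mixed v hvA u huB
    rw [dist_comm v u, dist_comm (h v) u] at this
    simpa [huA, hvA] using this
  · have hd : (1 / K) * dist u v ≤ dist u v ∧ dist u v ≤ K * dist u v := by
      constructor
      · have := dist_nonneg (x := u) (y := v)
        rw [div_mul_eq_mul_div, one_mul, div_le_iff₀ hK]
        nlinarith
      · nlinarith [dist_nonneg (x := u) (y := v)]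
    simpa [huA, hvA] using hd
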